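/- For every ρ > −1 and every real number c: if the function σ ↦ H(p^σ) has derivative c at the point ρ, then the function σ ↦ D(p^σ‖p) has derivative ρ·c at the point ρ. -/

import Mathlib

open scoped BigOperators

noncomputable section

/-- `q` is a probability mass function on `Z`. -/
def IsPMF {Z : Type*} [Fintype Z] (q : Z → ℝ) : Prop :=
  (∀ z, 0 ≤ q z) ∧ ∑ z, q z = 1

/-- Shannon entropy in nats. -/
def entropy {Z : Type*} [Fintype Z] (q : Z → ℝ) : ℝ :=
  - ∑ z, q z * Real.log (q z)

/-- Kullback–Leibler divergence in nats. -/
def klDiv {Z : Type*} [Fintype Z] (q p : Z → ℝ) : ℝ :=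
  ∑ z, q z * Real.log (q z / p z)

/-- The tilted distribution `p^ρ(z) = p(z)^{1/(1+ρ)} / Σ_s p(s)^{1/(1+ρ)}`. -/
def tilted {Z : Type*} [Fintype Z] (p : Z → ℝ) (ρ : ℝ) : Z → ℝ :=
  fun z => p z ^ (1 / (1 + ρ)) / ∑ s, p s ^ (1 / (1 + ρ))

/-- Lemma 18: `d/dρ D(p^ρ‖p) = ρ · d/dρ H(p^ρ)`. -/
theorem statement18 {Z : Type*} [Fintype Z] [Nonempty Z]
    (p : Z → ℝ) (hp : IsPMF p) (hpos : ∀ z, 0 < p z)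
    (ρ : ℝ) (hρ : -1 < ρ) (c : ℝ)
    (hd : HasDerivAt (fun σ : ℝ => entropy (tilted p σ)) c ρ) :
    HasDerivAt (fun σ : ℝ => klDiv (tilted p σ) p) (ρ * c) ρ := by
  classical
  set S : ℝ → ℝ := fun σ => ∑ s, p s ^ (1 / (1 + σ)) with hSdef
  have hSpos : ∀ σ : ℝ, 0 < S σ := fun σ =>
    Finset.sum_pos (fun s _ => Real.rpow_pos_of_pos (hpos s) _) Finset.univ_nonempty
  have hρ0 : (1:ℝ) + ρ ≠ 0 := by linarith
  have hqpos : ∀ σ : ℝ, ∀ z, 0 < tilted p σ z := fun σ z =>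
    div_pos (Real.rpow_pos_of_pos (hpos z) _) (hSpos σ)
  -- sum of tilted values is 1
  have hsum1 : ∀ σ : ℝ, ∑ z, tilted p σ z = 1 := by
    intro σ
    simp only [tilted, ← Finset.sum_div]
    exact div_self (ne_of_gt (hSpos σ))
  -- log of tilted
  have hlogq : ∀ σ : ℝ, ∀ z, Real.log (tilted p σ z) =
      (1 / (1 + σ)) * Real.log (p z) - Real.log (S σ) := by
    intro σ z
    show Real.log (p z ^ (1 / (1 + σ)) / S σ) = _
    rw [Real.log_div (ne_of_gt (Real.rpow_pos_of_pos (hpos z) _)) (ne_of_gt (hSpos σ)),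
      Real.log_rpow (hpos z)]
  -- key identity: klDiv = σ H - (1+σ) log S   (for 1+σ ≠ 0)
  have hid : ∀ σ : ℝ, 1 + σ ≠ 0 →
      klDiv (tilted p σ) p = σ * entropy (tilted p σ) - (1 + σ) * Real.log (S σ) := by
    intro σ hσ
    have hlogp : ∀ z, Real.log (p z)
        = (1 + σ) * (Real.log (tilted p σ z) + Real.log (S σ)) := by
      intro z
      rw [hlogq σ z]
      field_simp
      ring
    have h1 : klDiv (tilted p σ) p
        = ∑ z, (-σ * (tilted p σ z * Real.log (tilted p σ z))
            - tilted p σ z * ((1 + σ) * Real.log (S σ))) := by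
      unfold klDiv
      refine Finset.sum_congr rfl fun z _ => ?_
      rw [Real.log_div (ne_of_gt (hqpos σ z)) (ne_of_gt (hpos z)), hlogp z]
      ring
    rw [h1, Finset.sum_sub_distrib, ← Finset.mul_sum, ← Finset.sum_mul, hsum1 σ]
    unfold entropy
    ring
  -- derivative of S
  set β : ℝ := 1 / (1 + ρ) with hβdef
  set T : ℝ := ∑ z, p z ^ β * Real.log (p z) with hTdef
  have hβd : HasDerivAt (fun σ : ℝ => 1 / (1 + σ)) (-(1 / (1 + ρ) ^ 2)) ρ := by
    have h1 : HasDerivAt (fun σ : ℝ => 1 + σ) 1 ρ := (hasDerivAt_id ρ).const_add 1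
    have := h1.fun_inv hρ0
    simpa [one_div, neg_div] using this
  have hSder : HasDerivAt S ((-(1 / (1 + ρ) ^ 2)) * T) ρ := by
    have hterm : ∀ z : Z, HasDerivAt (fun σ : ℝ => p z ^ (1 / (1 + σ)))
        ((-(1 / (1 + ρ) ^ 2)) * (p z ^ β * Real.log (p z))) ρ := by
      intro z
      have hc : HasDerivAt (fun _ : ℝ => p z) 0 ρ := hasDerivAt_const ρ (p z)
      have := hc.rpow hβd (hpos z)
      simpa [hβdef] using this.congr_deriv (by ring)
    have := HasDerivAt.fun_sum (fun z (_ : z ∈ Finset.univ) => hterm z)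
    simpa [hSdef, hTdef, Finset.mul_sum] using this
  have hGd : HasDerivAt (fun σ => Real.log (S σ))
      ((-(1 / (1 + ρ) ^ 2)) * T / S ρ) ρ := hSder.log (ne_of_gt (hSpos ρ))
  -- entropy at ρ in terms of T and log S
  have hH : entropy (tilted p ρ) = -(β * (T / S ρ)) + Real.log (S ρ) := by
    unfold entropy
    have h2 : ∀ z ∈ (Finset.univ : Finset Z),
        tilted p ρ z * Real.log (tilted p ρ z)
          = β * (tilted p ρ z * Real.log (p z)) - tilted p ρ z * Real.log (S ρ) := by
      intro z _
      rw [hlogq ρ z, ← hβdef]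
      ring
    rw [Finset.sum_congr rfl h2, Finset.sum_sub_distrib, ← Finset.mul_sum,
      ← Finset.sum_mul, hsum1 ρ]
    have h3 : ∑ z, tilted p ρ z * Real.log (p z) = T / S ρ := by
      rw [hTdef, Finset.sum_div]
      refine Finset.sum_congr rfl fun z _ => ?_
      show p z ^ β / S ρ * Real.log (p z) = _
      ring
    rw [h3]
    ring
  -- key scalar identity
  have hkey : (1 + ρ) * ((-(1 / (1 + ρ) ^ 2)) * T / S ρ)
      = entropy (tilted p ρ) - Real.log (S ρ) := by
    have haux : (1 + ρ) * (-(1 / (1 + ρ) ^ 2)) = -(1 / (1 + ρ)) := by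
      field_simp
    rw [hH, hβdef]
    calc (1 + ρ) * (-(1 / (1 + ρ) ^ 2) * T / S ρ)
        = ((1 + ρ) * (-(1 / (1 + ρ) ^ 2))) * (T / S ρ) := by ring
      _ = -(1 / (1 + ρ)) * (T / S ρ) := by rw [haux]
      _ = -(1 / (1 + ρ) * (T / S ρ)) + Real.log (S ρ) - Real.log (S ρ) := by ring
  -- derivative of the RHS formula
  have hF : HasDerivAt (fun σ : ℝ => σ * entropy (tilted p σ) - (1 + σ) * Real.log (S σ))
      ((1 * entropy (tilted p ρ) + ρ * c)
        - (1 * Real.log (S ρ) + (1 + ρ) * ((-(1 / (1 + ρ) ^ 2)) * T / S ρ))) ρ :=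
    ((hasDerivAt_id ρ).mul hd).sub (((hasDerivAt_id ρ).const_add 1).mul hGd)
  -- eventual equality
  have hev : (fun σ : ℝ => klDiv (tilted p σ) p)
      =ᶠ[nhds ρ] fun σ : ℝ => σ * entropy (tilted p σ) - (1 + σ) * Real.log (S σ) := by
    filter_upwards [eventually_gt_nhds hρ] with σ hσ
    exact hid σ (by linarith)
  have hfin := hF.congr_of_eventuallyEq hev
  refine hfin.congr_deriv ?_
  linarith [hkey]
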